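/- Let n ≥ 2 and let A_n be the binary-tree sequence. Then: (1) the length of a_n is 2^{n-1} − 1 and the length of A_n is 2^{n-1}; (2) every term of A_n lies in {1, …, n−1}; (3) for every m ∈ {1, …, n−1}, the number of indices i with A_n(i) = m is even. -/

import Mathlib

open Matrix

noncomputable section

/-- Kronecker product of square matrices with flat `Fin` indexing
(first factor most significant: `(A ⊗ B)[i*b+r, j*b+s] = A[i,j] * B[r,s]`). -/
def kron {R : Type*} [Mul R] {a b : ℕ} (A : Matrix (Fin a) (Fin a) R)
    (B : Matrix (Fin b) (Fin b) R) : Matrix (Fin (a * b)) (Fin (a * b)) R := fun i j =>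
  have hb : 0 < b := Nat.pos_of_ne_zero fun hb0 => by
    subst hb0; exact absurd i.isLt (by omega)
  A ⟨i.val / b, Nat.div_lt_of_lt_mul (Nat.mul_comm a b ▸ i.isLt)⟩
    ⟨j.val / b, Nat.div_lt_of_lt_mul (Nat.mul_comm a b ▸ j.isLt)⟩ *
  B ⟨i.val % b, Nat.mod_lt _ hb⟩ ⟨j.val % b, Nat.mod_lt _ hb⟩

/-- Kronecker product of (column) vectors with flat `Fin` indexing. -/
def kronV {R : Type*} [Mul R] {a b : ℕ} (u : Fin a → R) (v : Fin b → R) :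
    Fin (a * b) → R := fun i =>
  have hb : 0 < b := Nat.pos_of_ne_zero fun hb0 => by
    subst hb0; exact absurd i.isLt (by omega)
  u ⟨i.val / b, Nat.div_lt_of_lt_mul (Nat.mul_comm a b ▸ i.isLt)⟩ *
  v ⟨i.val % b, Nat.mod_lt _ hb⟩

/-- Transport a square matrix along an equality of sizes. -/
def castM {R : Type*} {a b : ℕ} (h : a = b) (A : Matrix (Fin a) (Fin a) R) :
    Matrix (Fin b) (Fin b) R := fun i j => A (Fin.cast h.symm i) (Fin.cast h.symm j)

/-- Transport a vector along an equality of sizes. -/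
def castV {R : Type*} {a b : ℕ} (h : a = b) (u : Fin a → R) : Fin b → R :=
  fun i => u (Fin.cast h.symm i)

theorem two_pow_pred_mul_two {n : ℕ} (hn : 1 ≤ n) : 2 ^ (n - 1) * 2 = 2 ^ n := by
  rw [← pow_succ]; congr 1; omega

theorem half_lt {n x : ℕ} (hx : x < 2 ^ n) : x / 2 < 2 ^ (n - 1) := by
  rcases Nat.eq_zero_or_pos n with h | h
  · subst h; simp only [pow_zero] at hx ⊢; omega
  · have h2 : (2 : ℕ) ^ (n - 1) * 2 = 2 ^ n := two_pow_pred_mul_two h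
    omega

/-- `⌊j/2⌋` as an element of `Fin (2^(n-1))`. -/
def half {n : ℕ} (j : Fin (2 ^ n)) : Fin (2 ^ (n - 1)) := ⟨j.val / 2, half_lt j.isLt⟩

/-- The index `2i` (1-indexed: `2i-1`). -/
def dbl {n : ℕ} (hn : 1 ≤ n) (i : Fin (2 ^ (n - 1))) : Fin (2 ^ n) :=
  ⟨2 * i.val, by
    have h1 := i.isLt
    have h2 : (2 : ℕ) ^ (n - 1) * 2 = 2 ^ n := two_pow_pred_mul_two hn
    omega⟩

/-- The index `2i+1` (1-indexed: `2i`). -/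
def dbl1 {n : ℕ} (hn : 1 ≤ n) (i : Fin (2 ^ (n - 1))) : Fin (2 ^ n) :=
  ⟨2 * i.val + 1, by
    have h1 := i.isLt
    have h2 : (2 : ℕ) ^ (n - 1) * 2 = 2 ^ n := two_pow_pred_mul_two hn
    omega⟩

/-- The identity matrix `I_m` over `ℂ`. -/
def idM (m : ℕ) : Matrix (Fin m) (Fin m) ℂ := 1

/-- The 2×2 identity matrix `I_2`. -/
def I2 : Matrix (Fin 2) (Fin 2) ℂ := 1

/-- The Pauli matrix `X = [[0,1],[1,0]]`. -/
def pauliX : Matrix (Fin 2) (Fin 2) ℂ := !![0, 1; 1, 0]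

/-- The projector `π₀ = [[1,0],[0,0]]`. -/
def proj0 : Matrix (Fin 2) (Fin 2) ℂ := !![1, 0; 0, 0]

/-- The projector `π₁ = [[0,0],[0,1]]`. -/
def proj1 : Matrix (Fin 2) (Fin 2) ℂ := !![0, 0; 0, 1]

/-- `D₁(φ) = diag(e^{iφ}, e^{-iφ})`. -/
def D1 (φ : ℝ) : Matrix (Fin 2) (Fin 2) ℂ :=
  !![Complex.exp (Complex.I * (φ : ℂ)), 0; 0, Complex.exp (-(Complex.I * (φ : ℂ)))]

/-- `D_m(α) = diag(e^{iα₁}, …, e^{iα_{2^m}})`. -/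
def Dm (m : ℕ) (α : Fin (2 ^ m) → ℝ) : Matrix (Fin (2 ^ m)) (Fin (2 ^ m)) ℂ :=
  Matrix.diagonal fun j => Complex.exp (Complex.I * (α j : ℂ))

/-- The control matrix
`L(k) = I^{⊗(k-1)} ⊗ π₀ ⊗ I^{⊗(n-k)} + I^{⊗(k-1)} ⊗ π₁ ⊗ I^{⊗(n-k-1)} ⊗ X`
(defined to be the identity for `k` outside `{1,…,n-1}`). -/
def Lmat (n k : ℕ) : Matrix (Fin (2 ^ n)) (Fin (2 ^ n)) ℂ :=
  if h : 1 ≤ k ∧ k < n then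
    castM (by rw [← pow_succ, ← pow_add]; congr 1; omega)
      (kron (kron (idM (2 ^ (k - 1))) proj0) (idM (2 ^ (n - k)))) +
    castM (by rw [← pow_succ, ← pow_add, ← pow_succ]; congr 1; omega)
      (kron (kron (kron (idM (2 ^ (k - 1))) proj1) (idM (2 ^ (n - k - 1)))) pauliX)
  else 1

/-- The half of the binary-tree sequence: `a_2 = (1)`,
`a_m = (a_{m-1}+1) ∘ (1) ∘ (a_{m-1}+1)`. -/
def aSeq : ℕ → List ℕ
  | 0 => []
  | 1 => []
  | 2 => [1]
  | n + 3 => ((aSeq (n + 2)).map (· + 1)) ++ [1] ++ ((aSeq (n + 2)).map (· + 1))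

/-- The binary-tree sequence `A_n = a_n ∘ (1)`. -/
def ASeq (n : ℕ) : List ℕ := aSeq n ++ [1]

/-- The all-ones vector `[1,1]^{⊗k}` (of arbitrary length). -/
def onesV (m : ℕ) : Fin m → ℝ := fun _ => 1

/-- The vector `[1,-1]`. -/
def signV : Fin 2 → ℝ := ![1, -1]

/-- `v_m = [1,1]^{⊗(m-1)} ⊗ [1,-1] ⊗ [1,1]^{⊗(n-1-m)}`
(defined to be all-ones for `m` outside `{1,…,n-1}`). -/
def vvec (n m : ℕ) : Fin (2 ^ (n - 1)) → ℝ :=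
  if h : 1 ≤ m ∧ m ≤ n - 1 then
    castV (by rw [← pow_succ, ← pow_add]; congr 1; omega)
      (kronV (kronV (onesV (2 ^ (m - 1))) signV) (onesV (2 ^ (n - 1 - m))))
  else onesV _

/-- The matrix `r_n`: its `i`-th column is the entrywise product
`∏_{k=1}^{i-1} v_{A_n(k)}`.  (`rMat n j i` is the `(j,i)` entry, `i` the column.) -/
def rMat (n : ℕ) : Matrix (Fin (2 ^ (n - 1))) (Fin (2 ^ (n - 1))) ℝ :=
  fun j i => ∏ k ∈ Finset.range i.val, vvec n ((ASeq n).getD k 1) j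

/-- `r_2 = [[1,1],[1,-1]]`. -/
def r2 : Matrix (Fin 2) (Fin 2) ℝ := !![1, 1; 1, -1]

/-- The `m`-fold Kronecker power `r_2^{⊗m}`. -/
def r2pow : (m : ℕ) → Matrix (Fin (2 ^ m)) (Fin (2 ^ m)) ℝ
  | 0 => 1
  | m + 1 => castM (pow_succ 2 m).symm (kron (r2pow m) r2)

/-- The block-diagonal matrix with 2×2 blocks `D₁(γ₁), …, D₁(γ_{2^{n-1}})`. -/
def blockD1 (n : ℕ) (γ : Fin (2 ^ (n - 1)) → ℝ) :
    Matrix (Fin (2 ^ n)) (Fin (2 ^ n)) ℂ := fun x y =>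
  if x.val / 2 = y.val / 2 then
    D1 (γ (half x)) ⟨x.val % 2, Nat.mod_lt _ (by norm_num)⟩
      ⟨y.val % 2, Nat.mod_lt _ (by norm_num)⟩
  else 0

lemma aSeq_succ (k : ℕ) : aSeq (k+3) =
    ((aSeq (k+2)).map (· + 1)) ++ [1] ++ ((aSeq (k+2)).map (· + 1)) := rfl

lemma aSeq_len : ∀ k, (aSeq (k+2)).length = 2 ^ (k+1) - 1 := by
  intro k
  induction k with
  | zero => rfl
  | succ k ih =>
    have h1 : 1 ≤ 2 ^ (k+1) := Nat.one_le_two_pow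
    have h2 : (2:ℕ) ^ (k+2) = 2 ^ (k+1) * 2 := by ring
    simp [aSeq_succ, ih]
    omega

lemma aSeq_mem : ∀ k, ∀ x ∈ aSeq (k+2), 1 ≤ x ∧ x ≤ k + 1 := by
  intro k
  induction k with
  | zero => intro x hx; simp [aSeq] at hx; omega
  | succ k ih =>
    intro x hx
    rw [aSeq_succ] at hx
    simp only [List.mem_append, List.mem_map, List.mem_singleton] at hx
    rcases hx with (⟨y, hy, rfl⟩ | rfl) | ⟨y, hy, rfl⟩
    · have := ih y hy; omega
    · omega
    · have := ih y hy; omega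

lemma aSeq_count_one : ∀ k, (aSeq (k+2)).count 1 = 1 := by
  intro k
  induction k with
  | zero => rfl
  | succ k ih =>
    have h0 : ((aSeq (k+2)).map (· + 1)).count 1 = 0 := by
      rw [List.count_eq_zero]
      intro h
      simp only [List.mem_map] at h
      obtain ⟨y, hy, hxy⟩ := h
      have := aSeq_mem k y hy; omega
    rw [aSeq_succ]
    simp [List.count_append, h0]

lemma aSeq_count_even : ∀ k m, 2 ≤ m → Even ((aSeq (k+2)).count m) := by
  intro k
  induction k with
  | zero =>
    intro m hm
    have : (aSeq 2).count m = 0 := by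
      rw [List.count_eq_zero]; intro h; simp [aSeq] at h; omega
    simp [this]
  | succ k ih =>
    intro m hm
    have h1 : m ≠ 1 := by omega
    rw [aSeq_succ]
    simp [List.count_append, List.count_singleton, List.count_cons, h1, Ne.symm h1]

theorem stmt5 (n : ℕ) (hn : 2 ≤ n) :
    (aSeq n).length = 2 ^ (n - 1) - 1 ∧
    (ASeq n).length = 2 ^ (n - 1) ∧
    (∀ x ∈ ASeq n, 1 ≤ x ∧ x ≤ n - 1) ∧
    (∀ m, 1 ≤ m → m ≤ n - 1 → Even ((ASeq n).count m)) := by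
  obtain ⟨k, rfl⟩ : ∃ k, n = k + 2 := ⟨n - 2, by omega⟩
  have hlen := aSeq_len k
  have hsimp : k + 2 - 1 = k + 1 := by omega
  have h1 : 1 ≤ 2 ^ (k+1) := Nat.one_le_two_pow
  refine ⟨by rw [hsimp]; exact hlen, ?_, ?_, ?_⟩
  · rw [hsimp]; simp [ASeq, hlen]; omega
  · intro x hx
    rw [hsimp]
    simp only [ASeq, List.mem_append, List.mem_singleton] at hx
    rcases hx with hx | rfl
    · exact aSeq_mem k x hx
    · omega
  · intro m hm1 hm2
    rw [hsimp] at hm2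
    rw [ASeq, List.count_append]
    rcases eq_or_lt_of_le hm1 with rfl | hm
    · rw [aSeq_count_one]
      simp
    · have hne : m ≠ 1 := by omega
      have : ([1] : List ℕ).count m = 0 := by rw [List.count_eq_zero]; simpa using hne
      rw [this, Nat.add_zero]
      exact aSeq_count_even k m (by omega)

end
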